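/- Let G be the set of functions V → V (V = {0, 1/2, 1}) generated from the identity function by closure under pointwise negation (¬p = 1-p), pointwise max, pointwise min, and composition with ◇₂ (◇₂: 1↦1, 1/2↦0, 0↦0). Then the function h : V → V defined by h(1) = 1/2, h(1/2) = 1, h(0) = 0 does not belong to G. -/
import Mathlib

/-- The three Kleene truth values 0, 1/2, 1. -/
inductive Tv | zero | half | one
deriving DecidableEq

/-- Kleene negation ¬p = 1 - p. -/
def tneg : Tv → Tv
  | .zero => .one | .half => .half | .one => .zero

/-- Max with respect to 0 < 1/2 < 1 (disjunction). -/
def tmax : Tv → Tv → Tv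
  | .one, _ => .one | _, .one => .one
  | .half, _ => .half | _, .half => .half
  | .zero, .zero => .zero

/-- Min with respect to 0 < 1/2 < 1 (conjunction). -/
def tmin : Tv → Tv → Tv
  | .zero, _ => .zero | _, .zero => .zero
  | .half, _ => .half | _, .half => .half
  | .one, .one => .one

/-- ◇₂ : 1 ↦ 1, 1/2 ↦ 0, 0 ↦ 0. -/
def td2 : Tv → Tv
  | .one => .one | .half => .zero | .zero => .zero

/-- The clone of unary functions generated from the identity under pointwise
    negation, max, min, and composition with ◇₂ (formulas of K₃ˢ + ◇₂ in one variable). -/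
inductive InG : (Tv → Tv) → Prop
  | id : InG id
  | neg : ∀ f, InG f → InG (fun p => tneg (f p))
  | max : ∀ f g, InG f → InG g → InG (fun p => tmax (f p) (g p))
  | min : ∀ f g, InG f → InG g → InG (fun p => tmin (f p) (g p))
  | dia : ∀ f, InG f → InG (fun p => td2 (f p))

lemma inG_one_ne_half : ∀ f, InG f → f Tv.one ≠ Tv.half := by
  intro f h
  induction h with
  | id => simp [id]
  | neg f _ ih => intro hc; apply ih; revert hc; cases hf : f Tv.one <;> simp [tneg, hf]
  | max f g _ _ ihf ihg =>
      intro hc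
      cases hf : f Tv.one <;> cases hg : g Tv.one <;>
        simp_all [tmax]
  | min f g _ _ ihf ihg =>
      intro hc
      cases hf : f Tv.one <;> cases hg : g Tv.one <;>
        simp_all [tmin]
  | dia f _ ih => intro hc; revert hc; cases hf : f Tv.one <;> simp [td2, hf]

theorem not_definable_with_d2 :
    ¬ InG (fun p => match p with | .one => .half | .half => .one | .zero => .zero) := by
  intro h
  exact inG_one_ne_half _ h rfl
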